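/- Suppose a one-form ρ and constants m, q, and the vectorial-nonmetricity data (c₁, c₂, c₃, b) satisfy, for all vectors ẋ: c₂ B ẋ_μ + (1/2)(c₃B² + c₁A) b_μ = ρ_μ(mA + qB²), where A is a nondegenerate quadratic and B = b_μẋ^μ with b ≠ 0. Then necessarily c₂ = 0, q ρ_μ = (c₃/2) b_μ, m ρ_μ = (c₁/2) b_μ, and c₃ m = c₁ q. -/

import Mathlib

/-- if `c₂ B ẋ_μ + ½(c₃B² + c₁A) b_μ = ρ_μ (mA + qB²)` for all ẋ, with `A`
nondegenerate (n ≥ 3) and `b ≠ 0`, then `c₂ = 0`, `q ρ = (c₃/2) b`, `m ρ = (c₁/2) b`,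
and `c₃ m = c₁ q`. -/
theorem first_metrizability_constraints (n : ℕ) (hn : 3 ≤ n)
    (a : Matrix (Fin n) (Fin n) ℝ) (hsym : ∀ i j, a i j = a j i) (hdet : a.det ≠ 0)
    (b ρ : Fin n → ℝ) (hb : b ≠ 0)
    (c₁ c₂ c₃ m q : ℝ)
    (h : ∀ x : Fin n → ℝ, ∀ μ : Fin n,
      c₂ * (∑ τ, b τ * x τ) * (∑ σ, a μ σ * x σ)
        + (1/2) * (c₃ * (∑ τ, b τ * x τ)^2 + c₁ * (∑ τ, ∑ σ, a τ σ * x τ * x σ)) * b μ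
      = ρ μ * (m * (∑ τ, ∑ σ, a τ σ * x τ * x σ) + q * (∑ τ, b τ * x τ)^2)) :
    c₂ = 0 ∧ (∀ μ, q * ρ μ = (c₃ / 2) * b μ) ∧ (∀ μ, m * ρ μ = (c₁ / 2) * b μ)
      ∧ c₃ * m = c₁ * q := by
  classical
  -- basic sum expansion lemmas
  have swapC : ∀ x y : Fin n → ℝ,
      (∑ τ, ∑ σ, a τ σ * y τ * x σ) = ∑ τ, ∑ σ, a τ σ * x τ * y σ := by
    intro x y
    rw [Finset.sum_comm]
    exact Finset.sum_congr rfl fun τ _ => Finset.sum_congr rfl fun σ _ => by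
      rw [hsym]; ring
  have expandS : ∀ x y : Fin n → ℝ,
      (∑ τ, b τ * (x τ + y τ)) = (∑ τ, b τ * x τ) + ∑ τ, b τ * y τ := by
    intro x y
    rw [← Finset.sum_add_distrib]
    exact Finset.sum_congr rfl fun τ _ => by ring
  have expandL : ∀ (μ : Fin n) (x y : Fin n → ℝ),
      (∑ σ, a μ σ * (x σ + y σ)) = (∑ σ, a μ σ * x σ) + ∑ σ, a μ σ * y σ := by
    intro μ x y
    rw [← Finset.sum_add_distrib]
    exact Finset.sum_congr rfl fun σ _ => by ring
  have expandQ : ∀ x y : Fin n → ℝ,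
      (∑ τ, ∑ σ, a τ σ * (x τ + y τ) * (x σ + y σ))
        = (∑ τ, ∑ σ, a τ σ * x τ * x σ) + 2 * (∑ τ, ∑ σ, a τ σ * x τ * y σ)
          + (∑ τ, ∑ σ, a τ σ * y τ * y σ) := by
    intro x y
    have e1 : (∑ τ, ∑ σ, a τ σ * (x τ + y τ) * (x σ + y σ))
        = ∑ τ, ((∑ σ, a τ σ * x τ * x σ) + (∑ σ, a τ σ * x τ * y σ)
            + (∑ σ, a τ σ * y τ * x σ) + (∑ σ, a τ σ * y τ * y σ)) := by
      refine Finset.sum_congr rfl fun τ _ => ?_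
      rw [← Finset.sum_add_distrib, ← Finset.sum_add_distrib, ← Finset.sum_add_distrib]
      exact Finset.sum_congr rfl fun σ _ => by ring
    rw [e1]
    rw [Finset.sum_add_distrib, Finset.sum_add_distrib, Finset.sum_add_distrib, swapC x y]
    ring
  -- polarized (bilinear) identity
  have bilin : ∀ (x y : Fin n → ℝ) (μ : Fin n),
      c₂ * ((∑ τ, b τ * x τ) * (∑ σ, a μ σ * y σ)
            + (∑ τ, b τ * y τ) * (∑ σ, a μ σ * x σ))
        + c₃ * (∑ τ, b τ * x τ) * (∑ τ, b τ * y τ) * b μ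
        + c₁ * (∑ τ, ∑ σ, a τ σ * x τ * y σ) * b μ
      = ρ μ * (2 * m * (∑ τ, ∑ σ, a τ σ * x τ * y σ)
            + 2 * q * (∑ τ, b τ * x τ) * (∑ τ, b τ * y τ)) := by
    intro x y μ
    have hxy := h (x + y) μ
    have hx := h x μ
    have hy := h y μ
    simp only [Pi.add_apply] at hxy
    rw [expandS x y, expandL μ x y, expandQ x y] at hxy
    linear_combination hxy - hx - hy
  -- dot-product rewriting
  have hL : ∀ (μ : Fin n) (y : Fin n → ℝ), (∑ σ, a μ σ * y σ) = (a.mulVec y) μ := by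
    intro μ y
    simp [Matrix.mulVec, dotProduct]
  have hC : ∀ x y : Fin n → ℝ,
      (∑ τ, ∑ σ, a τ σ * x τ * y σ) = ∑ τ, x τ * (a.mulVec y) τ := by
    intro x y
    refine Finset.sum_congr rfl fun τ _ => ?_
    rw [← hL τ y, Finset.mul_sum]
    exact Finset.sum_congr rfl fun σ _ => by ring
  -- injectivity of mulVec
  have hinj : ∀ y : Fin n → ℝ, a.mulVec y = 0 → y = 0 := by
    intro y hy
    have h1 : (a⁻¹ * a).mulVec y = a⁻¹.mulVec (a.mulVec y) := by
      rw [← Matrix.mulVec_mulVec]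
    rw [Matrix.nonsing_inv_mul a (isUnit_iff_ne_zero.mpr hdet), hy, Matrix.one_mulVec,
      Matrix.mulVec_zero] at h1
    exact h1
  -- pick k with b k ≠ 0
  obtain ⟨k, hk⟩ : ∃ k, b k ≠ 0 := by
    by_contra h'
    push_neg at h'
    exact hb (funext h')
  have hββ : (0:ℝ) < ∑ τ, b τ * b τ := by
    have h1 : b k * b k ≤ ∑ τ, b τ * b τ :=
      Finset.single_le_sum (f := fun τ => b τ * b τ)
        (fun i _ => mul_self_nonneg _) (Finset.mem_univ k)
    have h2 : 0 < b k * b k := mul_self_pos.mpr hk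
    linarith
  have hβ : (∑ τ, b τ * b τ) ≠ 0 := ne_of_gt hββ
  -- key: two b-orthogonal vectors not a-orthogonal
  have key : ∃ x y : Fin n → ℝ, (∑ τ, b τ * x τ) = 0 ∧ (∑ τ, b τ * y τ) = 0 ∧
      (∑ τ, ∑ σ, a τ σ * x τ * y σ) ≠ 0 := by
    by_contra hcon
    push_neg at hcon
    -- step A: for y ⟂ b, a *ᵥ y is a multiple of b
    have stepA : ∀ y : Fin n → ℝ, (∑ τ, b τ * y τ) = 0 →
        a.mulVec y = ((∑ τ, b τ * (a.mulVec y) τ) / (∑ τ, b τ * b τ)) • b := by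
      intro y hy
      set v := a.mulVec y with hv
      set c : ℝ := (∑ τ, b τ * v τ) / (∑ τ, b τ * b τ) with hc'
      set x : Fin n → ℝ := fun τ => v τ - c * b τ with hx'
      have hbx : (∑ τ, b τ * x τ) = 0 := by
        simp only [hx', mul_sub]
        rw [Finset.sum_sub_distrib]
        have : (∑ τ, b τ * (c * b τ)) = c * ∑ τ, b τ * b τ := by
          rw [Finset.mul_sum]
          exact Finset.sum_congr rfl fun τ _ => by ring
        rw [this, hc']
        rw [div_mul_cancel₀ _ hβ, sub_self]
      have hxv : (∑ τ, x τ * v τ) = 0 := by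
        have := hcon x y hbx hy
        rw [hC x y] at this
        exact this
      have hxx : (∑ τ, x τ * x τ) = 0 := by
        have e1 : (∑ τ, x τ * x τ) = (∑ τ, x τ * v τ) - c * (∑ τ, b τ * x τ) := by
          rw [Finset.mul_sum, ← Finset.sum_sub_distrib]
          exact Finset.sum_congr rfl fun τ _ => by simp only [hx']; ring
        rw [e1, hxv, hbx]
        ring
      have hx0 : ∀ τ, x τ = 0 := by
        intro τ
        have h1 : ∀ i ∈ Finset.univ, (0:ℝ) ≤ x i * x i := fun i _ => mul_self_nonneg _
        have h2 := (Finset.sum_eq_zero_iff_of_nonneg h1).mp hxx τ (Finset.mem_univ τ)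
        exact mul_self_eq_zero.mp h2
      funext τ
      have := hx0 τ
      simp only [hx'] at this
      simp only [Pi.smul_apply, smul_eq_mul]
      linarith
    -- pick i ≠ j both ≠ k
    have hcard : 1 < (Finset.univ.erase k).card := by
      rw [Finset.card_erase_of_mem (Finset.mem_univ k), Finset.card_univ, Fintype.card_fin]
      omega
    obtain ⟨i, hi, j, hj, hij⟩ := Finset.one_lt_card.mp hcard
    have hik : i ≠ k := Finset.ne_of_mem_erase hi
    have hjk : j ≠ k := Finset.ne_of_mem_erase hj
    -- the b-orthogonal test vectors
    set Y : Fin n → (Fin n → ℝ) := fun i τ =>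
      (if τ = i then (1:ℝ) else 0) - (b i / b k) * (if τ = k then 1 else 0) with hY
    have hYorth : ∀ i, (∑ τ, b τ * Y i τ) = 0 := by
      intro i
      simp only [hY, mul_sub, mul_ite, mul_one, mul_zero, Finset.sum_sub_distrib,
        Finset.sum_ite_eq', Finset.mem_univ, if_true]
      field_simp
      ring
    have hYdiag : ∀ i, i ≠ k → Y i i = 1 := by
      intro i hik
      simp [hY, hik]
    have hYoff : ∀ i j, i ≠ j → j ≠ k → Y i j = 0 := by
      intro i j h1 h2
      simp [hY, Ne.symm h1, h2]
    set γ : (Fin n → ℝ) → ℝ := fun y => (∑ τ, b τ * (a.mulVec y) τ) / (∑ τ, b τ * b τ)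
      with hγ
    have hAi := stepA (Y i) (hYorth i)
    have hAj := stepA (Y j) (hYorth j)
    -- z := γ (Y j) • Y i - γ (Y i) • Y j  maps to 0 under a
    set z : Fin n → ℝ := fun τ => γ (Y j) * Y i τ - γ (Y i) * Y j τ with hz
    have hz0 : a.mulVec z = 0 := by
      have : z = γ (Y j) • Y i - γ (Y i) • Y j := by
        funext τ; simp [hz]
      rw [this, Matrix.mulVec_sub, Matrix.mulVec_smul, Matrix.mulVec_smul, hAi, hAj]
      funext τ
      simp only [Pi.sub_apply, Pi.smul_apply, smul_eq_mul, Pi.zero_apply, hγ]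
      ring
    have hzz : z = 0 := hinj z hz0
    have hγj : γ (Y j) = 0 := by
      have := congrFun hzz i
      simp only [hz, Pi.zero_apply] at this
      rw [hYdiag i hik, hYoff j i (Ne.symm hij) hik] at this
      linarith
    have hγi : γ (Y i) = 0 := by
      have := congrFun hzz j
      simp only [hz, Pi.zero_apply] at this
      rw [hYdiag j hjk, hYoff i j hij hjk] at this
      linarith
    -- then a *ᵥ Y i = 0, so Y i = 0, contradiction with Y i i = 1
    have : a.mulVec (Y i) = 0 := by
      rw [hAi]
      have e0 : (∑ τ, b τ * (a.mulVec (Y i)) τ) / (∑ τ, b τ * b τ) = γ (Y i) := rfl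
      rw [e0, hγi, zero_smul]
    have hYi0 := hinj (Y i) this
    have := congrFun hYi0 i
    rw [hYdiag i hik] at this
    simp at this
  -- now the main argument
  obtain ⟨x₀, y₀, hx₀, hy₀, hC₀⟩ := key
  -- step 1: m ρ = (c₁/2) b
  have step1 : ∀ μ, m * ρ μ = c₁ / 2 * b μ := by
    intro μ
    have e := bilin x₀ y₀ μ
    rw [hx₀, hy₀] at e
    have h2 : (m * ρ μ - c₁ / 2 * b μ) * (2 * (∑ τ, ∑ σ, a τ σ * x₀ τ * y₀ σ)) = 0 := by
      linear_combination -e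
    rcases mul_eq_zero.mp h2 with h3 | h3
    · linarith
    · exact absurd (by linarith : (∑ τ, ∑ σ, a τ σ * x₀ τ * y₀ σ) = 0) hC₀
  -- a *ᵥ y₀ ≠ 0, so some component nonzero
  have hay₀ : ∃ μ₀, (a.mulVec y₀) μ₀ ≠ 0 := by
    by_contra h'
    push_neg at h'
    apply hC₀
    rw [hC x₀ y₀]
    exact Finset.sum_eq_zero fun τ _ => by rw [h' τ, mul_zero]
  obtain ⟨μ₀, hμ₀⟩ := hay₀
  -- step 2: c₂ = 0
  have hc₂ : c₂ = 0 := by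
    have e := bilin b y₀ μ₀
    rw [hy₀] at e
    have h4 : c₂ * ((∑ τ, b τ * b τ) * (a.mulVec y₀) μ₀) = 0 := by
      rw [← hL μ₀ y₀]
      linear_combination e + 2 * (∑ τ, ∑ σ, a τ σ * b τ * y₀ σ) * step1 μ₀
    rcases mul_eq_zero.mp h4 with h5 | h5
    · exact h5
    · rcases mul_eq_zero.mp h5 with h6 | h6
      · exact absurd h6 hβ
      · exact absurd h6 hμ₀
  -- step 3: q ρ = (c₃/2) b
  have step3 : ∀ μ, q * ρ μ = c₃ / 2 * b μ := by
    intro μ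
    have e := bilin b b μ
    rw [hc₂] at e
    have h5 : (q * ρ μ - c₃ / 2 * b μ) * (2 * (∑ τ, b τ * b τ) * (∑ τ, b τ * b τ)) = 0 := by
      linear_combination -e - 2 * (∑ τ, ∑ σ, a τ σ * b τ * b σ) * step1 μ
    rcases mul_eq_zero.mp h5 with h6 | h6
    · linarith
    · exact absurd h6 (by positivity)
  refine ⟨hc₂, fun μ => step3 μ, fun μ => step1 μ, ?_⟩
  have h7 : c₃ * m * b k = c₁ * q * b k := by
    linear_combination 2 * q * step1 k - 2 * m * step3 k
  exact mul_right_cancel₀ hk h7
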